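/- Let t ≥ 2, ω a primitive t-th root of unity, Y=(y_1,…,y_m), and λ a partition with at most tm parts. Then the skew Schur polynomial s_{λ/μ}(Y, ωY, …, ω^{t−1}Y) vanishes for every partition μ strictly contained in λ if and only if λ equals its own t-core. -/

import Mathlib

open scoped BigOperators

noncomputable section

variable {K : Type} [Field K]

/-- Complete homogeneous symmetric polynomial of degree `m` in the list of variables `X`. -/
def hh : ℕ → List K → K
  | 0, _ => 1
  | _ + 1, [] => 0
  | m + 1, x :: xs => x * hh m (x :: xs) + hh (m + 1) xs
  termination_by m X => (m, X.length)

/-- `h` indexed by an integer: zero for a negative index. -/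
def hz (m : ℤ) (X : List K) : K := if 0 ≤ m then hh m.toNat X else 0

def invList (X : List K) : List K := X.map (·⁻¹)
def negList (X : List K) : List K := X.map (fun x => -x)
def powList (X : List K) (e : ℕ) : List K := X.map (· ^ e)

/-- the variables `(X, ωX, ω²X, …, ω^{t-1}X)`. -/
def twistList (t : ℕ) (ω : K) (X : List K) : List K :=
  (List.range t).flatMap fun k => X.map (fun x => ω ^ k * x)

/-- Schur polynomial (Jacobi–Trudi, `N × N` determinant). -/
def schur (lam : ℕ → ℕ) (N : ℕ) (X : List K) : K :=
  Matrix.det (Matrix.of fun i j : Fin N => hz ((lam i : ℤ) - i + j) X)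

/-- Skew Schur polynomial. -/
def skewSchur (lam mu : ℕ → ℕ) (N : ℕ) (X : List K) : K :=
  Matrix.det (Matrix.of fun i j : Fin N => hz ((lam i : ℤ) - (mu j : ℤ) - i + j) X)

/-- Symplectic character `sp_λ(X)`. -/
def spChar (lam : ℕ → ℕ) (N : ℕ) (X : List K) : K :=
  (2 : K)⁻¹ * Matrix.det (Matrix.of fun i j : Fin N =>
    hz ((lam i : ℤ) - i + j) (X ++ invList X) + hz ((lam i : ℤ) - i - j) (X ++ invList X))

/-- Odd orthogonal character `so_λ(X)`. -/
def soChar (lam : ℕ → ℕ) (N : ℕ) (X : List K) : K :=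
  Matrix.det (Matrix.of fun i j : Fin N =>
    hz ((lam i : ℤ) - i + j) (X ++ invList X ++ [1]) -
      hz ((lam i : ℤ) - i - j - 2) (X ++ invList X ++ [1]))

/-- Even orthogonal character `oe_λ(X)`. -/
def oeChar (lam : ℕ → ℕ) (N : ℕ) (X : List K) : K :=
  Matrix.det (Matrix.of fun i j : Fin N =>
    hz ((lam i : ℤ) - i + j) (X ++ invList X) -
      hz ((lam i : ℤ) - i - j - 2) (X ++ invList X))

/-- Universal even orthogonal character `𝔬_λ(Z)`. -/
def uo (lam : ℕ → ℕ) (N : ℕ) (Z : List K) : K :=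
  Matrix.det (Matrix.of fun i j : Fin N =>
    hz ((lam i : ℤ) - i + j) Z - hz ((lam i : ℤ) - i - j - 2) Z)

/-- Universal symplectic character `𝔰𝔭_λ(Z)`. -/
def usp (lam : ℕ → ℕ) (N : ℕ) (Z : List K) : K :=
  (2 : K)⁻¹ * Matrix.det (Matrix.of fun i j : Fin N =>
    hz ((lam i : ℤ) - i + j) Z + hz ((lam i : ℤ) - i - j) Z)

/-- Universal odd orthogonal character `𝔰𝔬_λ(Z)`. -/
def uso (lam : ℕ → ℕ) (N : ℕ) (Z : List K) : K :=
  Matrix.det (Matrix.of fun i j : Fin N =>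
    hz ((lam i : ℤ) - i + j) Z + hz ((lam i : ℤ) - i - j - 1) Z)

/-- The variant `𝔰𝔬⁻_λ(Z)`. -/
def usoNeg (lam : ℕ → ℕ) (N : ℕ) (Z : List K) : K :=
  Matrix.det (Matrix.of fun i j : Fin N =>
    hz ((lam i : ℤ) - i + j) Z - hz ((lam i : ℤ) - i - j - 1) Z)

/-- beta-set `β(λ,m) = (λ_1+m-1, …, λ_m)`, as a (decreasing) list. -/
def betaList (lam : ℕ → ℕ) (m : ℕ) : List ℕ :=
  (List.range m).map fun i => lam i + (m - 1 - i)

/-- the number `n_i(λ,m)` of elements of `β(λ,m)` congruent to `i` mod `s`. -/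
def nres (lam : ℕ → ℕ) (m s i : ℕ) : ℕ :=
  ((betaList lam m).filter fun b => b % s = i).length

def sortDesc (L : List ℕ) : List ℕ := List.insertionSort (· ≥ ·) L

/-- the `s`-core of `λ`, computed from `β(λ,m)`. -/
def coreP (lam : ℕ → ℕ) (m s : ℕ) : ℕ → ℕ := fun k =>
  let L := sortDesc ((List.range s).flatMap fun i =>
    (List.range (nres lam m s i)).map fun j => s * j + i)
  if k < m then L.getD k 0 + k + 1 - m else 0

/-- the `i`-th member `λ^{(i)}` of the `s`-quotient of `λ`, computed from `β(λ,m)`. -/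
def quotP (lam : ℕ → ℕ) (m s i : ℕ) : ℕ → ℕ := fun k =>
  let L := sortDesc (((betaList lam m).filter fun b => b % s = i).map fun b => b / s)
  if k < L.length then L.getD k 0 + k + 1 - L.length else 0

/-- conjugate partition (`N` a bound on the number of parts). -/
def conjB (f : ℕ → ℕ) (N k : ℕ) : ℕ := ((Finset.range N).filter fun j => k < f j).card

/-- Frobenius rank. -/
def frank (f : ℕ → ℕ) (N : ℕ) : ℕ := ((Finset.range N).filter fun i => i + 1 ≤ f i).card

/-- number of nonzero parts (`N` a bound on the number of parts). -/
def plen (f : ℕ → ℕ) (N : ℕ) : ℕ := ((Finset.range N).filter fun i => 0 < f i).card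

/-- sum of the parts (`N` a bound on the number of parts). -/
def psum (f : ℕ → ℕ) (N : ℕ) : ℕ := ∑ i ∈ Finset.range N, f i

def IsSelfConj (f : ℕ → ℕ) (N : ℕ) : Prop := ∀ k, f k = conjB f N k

/-- symplectic partition: `(α | α+1)` in Frobenius coordinates. -/
def IsSymplecticP (f : ℕ → ℕ) (N : ℕ) : Prop := ∀ i < frank f N, conjB f N i = f i + 1

/-- orthogonal partition: `(α+1 | α)` in Frobenius coordinates. -/
def IsOrthogonalP (f : ℕ → ℕ) (N : ℕ) : Prop := ∀ i < frank f N, f i = conjB f N i + 1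

/-- the partition `(λ, -μ)_N`. -/
def negConcat (f g : ℕ → ℕ) (N : ℕ) : ℕ → ℕ := fun k =>
  if k < N then g 0 + f k - g (N - 1 - k) else 0

/-- number of inversions: pairs `i < j` with `L_i < L_j`. -/
def invCount (L : List ℕ) : ℕ :=
  (Finset.univ.filter fun p : Fin L.length × Fin L.length =>
    (p.1 : ℕ) < (p.2 : ℕ) ∧ L.get p.1 < L.get p.2).card

def sgnList (L : List ℕ) : ℤ := (-1) ^ invCount L

/-- rearrangement of `β(λ,m)`: residue classes mod `s` listed in the order given by `E`
followed by the remaining residues increasingly, decreasingly within each class. -/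
def blockedList (E : List ℕ) (lam : ℕ → ℕ) (m s : ℕ) : List ℕ :=
  (E ++ (List.range s).filter fun a => a ∉ E).flatMap fun e =>
    sortDesc ((betaList lam m).filter fun b => b % s = e)

/-- sign of the permutation `σ_λ^E`. -/
def sgnSigmaE (E : List ℕ) (lam : ℕ → ℕ) (m s : ℕ) : ℤ := sgnList (blockedList E lam m s)

/-- sign of the permutation `σ_λ`. -/
def sgnSigma (lam : ℕ → ℕ) (m s : ℕ) : ℤ := sgnSigmaE [] lam m s

/-- staircase partition `(k, k-1, …, 1)`. -/
def stair (k : ℕ) : ℕ → ℕ := fun i => k - i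

/-- a field containing `n` generic variables. -/
abbrev FF (n : ℕ) : Type := FractionRing (MvPolynomial (Fin n) ℂ)

/-- the `n` generic variables of `FF n`. -/
def genX (n : ℕ) : List (FF n) :=
  List.ofFn fun i : Fin n => algebraMap (MvPolynomial (Fin n) ℂ) (FF n) (MvPolynomial.X i)

end

noncomputable section PartA
open PowerSeries

lemma hh_zero (L : List ℂ) : hh 0 L = 1 := by cases L <;> simp [hh]

lemma hh_succ_nil (n : ℕ) : hh (n+1) ([] : List ℂ) = 0 := by simp [hh]

lemma hh_succ_cons (n : ℕ) (x : ℂ) (L : List ℂ) :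
    hh (n+1) (x :: L) = x * hh n (x :: L) + hh (n+1) L := by
  rw [hh]

/-- generating function of the `hh`'s -/
def hhS (L : List ℂ) : PowerSeries ℂ := PowerSeries.mk fun n => hh n L

def QS (L : List ℂ) : PowerSeries ℂ :=
  (L.map fun x => 1 - PowerSeries.C x * PowerSeries.X).prod

lemma hhS_nil : hhS ([] : List ℂ) = 1 := by
  ext n
  cases n <;> simp [hhS, hh_zero, hh_succ_nil, PowerSeries.coeff_mk]

lemma hhS_cons (x : ℂ) (L : List ℂ) :
    (1 - PowerSeries.C x * PowerSeries.X) * hhS (x :: L) = hhS L := by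
  have h : hhS (x :: L) = hhS L + PowerSeries.C x * (PowerSeries.X * hhS (x :: L)) := by
    ext n
    cases n with
    | zero => simp [hhS, hh_zero, PowerSeries.coeff_mk]
    | succ n =>
      simp [hhS, PowerSeries.coeff_mk, PowerSeries.coeff_succ_X_mul, hh_succ_cons,
        PowerSeries.coeff_C_mul]
      ring
  linear_combination h

lemma QS_mul_hhS (L : List ℂ) : QS L * hhS L = 1 := by
  induction L with
  | nil => simp [QS, hhS_nil]
  | cons x L ih =>
    have : QS (x :: L) = (1 - PowerSeries.C x * PowerSeries.X) * QS L := by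
      simp [QS]
    rw [this, mul_assoc, mul_comm (QS L), ← mul_assoc, hhS_cons, mul_comm, ih]

lemma hh_perm {L L' : List ℂ} (h : L.Perm L') (n : ℕ) : hh n L = hh n L' := by
  have hq : QS L = QS L' := (h.map _).prod_eq
  have hS : hhS L = hhS L' := by
    calc hhS L = hhS L * (QS L' * hhS L') := by rw [QS_mul_hhS, mul_one]
    _ = (QS L * hhS L) * hhS L' := by rw [← hq]; ring
    _ = hhS L' := by rw [QS_mul_hhS, one_mul]
  simpa [hhS, PowerSeries.coeff_mk] using congrArg (PowerSeries.coeff n) hS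

lemma hh_cons_zero (n : ℕ) (L : List ℂ) : hh n ((0 : ℂ) :: L) = hh n L := by
  cases n with
  | zero => simp [hh_zero]
  | succ n => rw [hh_succ_cons]; ring

lemma hh_append_replicate_zero (L : List ℂ) (r n : ℕ) :
    hh n (L ++ List.replicate r (0:ℂ)) = hh n L := by
  induction r with
  | zero => simp
  | succ r ih =>
    have hp : (L ++ List.replicate (r+1) (0:ℂ)).Perm ((0:ℂ) :: (L ++ List.replicate r 0)) := by
      have : List.replicate (r+1) (0:ℂ) = (0:ℂ) :: List.replicate r 0 := rfl
      rw [this]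
      exact List.perm_middle
    rw [hh_perm hp, hh_cons_zero, ih]

lemma hh_smul (c : ℂ) (L : List ℂ) (n : ℕ) :
    hh n (L.map (c * ·)) = c ^ n * hh n L := by
  induction L generalizing n with
  | nil => cases n <;> simp [hh_zero, hh_succ_nil]
  | cons x L ihL =>
    induction n with
    | zero => simp [hh_zero]
    | succ n ihn =>
      simp only [List.map_cons] at ihn ⊢
      rw [hh_succ_cons, hh_succ_cons, ihn, ihL]
      ring

end PartA
noncomputable section PartB
open PowerSeries

lemma twist_map_omega (t : ℕ) (ω : ℂ) (Y : List ℂ) :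
    twistList t ω (Y.map (ω * ·)) = (twistList t ω Y).map (ω * ·) := by
  unfold twistList
  rw [List.map_flatMap]
  apply List.flatMap_congr
  intro k _
  rw [List.map_map, List.map_map]
  congr 1
  funext y
  simp only [Function.comp]
  ring

lemma twist_rotate_perm {t : ℕ} (ht : 1 ≤ t) {ω : ℂ} (hω : ω ^ t = 1) (Y : List ℂ) :
    (twistList t ω (Y.map (ω * ·))).Perm (twistList t ω Y) := by
  obtain ⟨s, rfl⟩ : ∃ s, t = s + 1 := ⟨t - 1, by omega⟩
  set f : ℕ → List ℂ := fun k => Y.map (ω ^ k * ·) with hf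
  have key : twistList (s+1) ω (Y.map (ω * ·)) = ((List.range (s+1)).map (· + 1)).flatMap f := by
    unfold twistList
    rw [List.flatMap_map]
    apply List.flatMap_congr
    intro k _
    rw [List.map_map]
    simp only [hf]
    congr 1
    funext y
    simp only [Function.comp]
    rw [pow_succ]
    ring
  rw [key]
  have h2 : (List.range (s+1)).map (· + 1) = (List.range s).map (· + 1) ++ [s+1] := by
    rw [List.range_succ, List.map_append]; rfl
  have h3 : f (s+1) = f 0 := by
    simp only [hf, hω, pow_zero]
  have h4 : twistList (s+1) ω Y = (0 :: (List.range s).map (· + 1)).flatMap f := by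
    unfold twistList
    congr 1
    rw [List.range_succ_eq_map]
  rw [h2, h4, List.flatMap_append, List.flatMap_cons]
  simp only [List.flatMap_cons, List.flatMap_nil, List.append_nil, h3]
  exact List.perm_append_comm

lemma hh_twist_eq_zero {t : ℕ} (ht : 1 ≤ t) {ω : ℂ} (hω : IsPrimitiveRoot ω t)
    {n : ℕ} (hn : ¬ t ∣ n) (Y : List ℂ) : hh n (twistList t ω Y) = 0 := by
  have h1 : hh n (twistList t ω Y) = ω ^ n * hh n (twistList t ω Y) := by
    conv_lhs => rw [← hh_perm (twist_rotate_perm ht hω.pow_eq_one Y) n]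
    rw [twist_map_omega, hh_smul]
  have hω1 : ω ^ n ≠ 1 := fun h => hn (hω.dvd_of_pow_eq_one n h)
  have h2 : (ω ^ n - 1) * hh n (twistList t ω Y) = 0 := by linear_combination -h1
  rcases mul_eq_zero.mp h2 with h | h
  · exact absurd (by linear_combination h) hω1
  · exact h

lemma hz_neg {d : ℤ} (hd : d < 0) (L : List ℂ) : hz d L = 0 := by
  simp [hz, not_le.mpr hd]

lemma hz_zero (L : List ℂ) : hz 0 L = 1 := by simp [hz, hh_zero]

lemma hz_twist_eq_zero {t : ℕ} (ht : 1 ≤ t) {ω : ℂ} (hω : IsPrimitiveRoot ω t)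
    {d : ℤ} (hd : ¬ (t : ℤ) ∣ d) (Y : List ℂ) : hz d (twistList t ω Y) = 0 := by
  unfold hz
  split
  · rename_i h0
    apply hh_twist_eq_zero ht hω _ Y
    intro hdvd
    apply hd
    have : d = (d.toNat : ℤ) := (Int.toNat_of_nonneg h0).symm
    rw [this]
    exact_mod_cast Int.natCast_dvd_natCast.mpr hdvd
  · rfl

end PartB
noncomputable section PartC
open PowerSeries

lemma coeff_QS_high (L : List ℂ) : ∀ n, L.length < n → (PowerSeries.coeff n) (QS L) = 0 := by
  induction L with
  | nil =>
    intro n hn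
    simp only [QS, List.map_nil, List.prod_nil]
    rw [PowerSeries.coeff_one]
    simp; omega
  | cons x L ih =>
    intro n hn
    have hq : QS (x :: L) = QS L - PowerSeries.C x * (PowerSeries.X * QS L) := by
      simp [QS]; ring
    obtain ⟨k, rfl⟩ : ∃ k, n = k + 1 := ⟨n - 1, by simp at hn; omega⟩
    rw [hq, map_sub, PowerSeries.coeff_C_mul, PowerSeries.coeff_succ_X_mul]
    rw [ih (k+1) (by simp at hn ⊢; omega), ih k (by simp at hn ⊢; omega)]
    ring

lemma coeff_QS_top (L : List ℂ) :
    (PowerSeries.coeff L.length) (QS L) = (-1) ^ L.length * L.prod := by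
  induction L with
  | nil => simp [QS]
  | cons x L ih =>
    have hq : QS (x :: L) = QS L - PowerSeries.C x * (PowerSeries.X * QS L) := by
      simp [QS]; ring
    rw [List.length_cons, hq, map_sub, PowerSeries.coeff_C_mul, PowerSeries.coeff_succ_X_mul,
      ih, coeff_QS_high L (L.length + 1) (by omega)]
    simp [pow_succ]
    ring

lemma constCoeff_QS (L : List ℂ) : (PowerSeries.coeff 0) (QS L) = 1 := by
  induction L with
  | nil => simp [QS]
  | cons x L ih =>
    have hq : QS (x :: L) = QS L - PowerSeries.C x * (PowerSeries.X * QS L) := by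
      simp [QS]; ring
    rw [hq, map_sub, PowerSeries.coeff_C_mul]
    rw [show (0:ℕ) = 0 from rfl] at *
    simp [ih, PowerSeries.coeff_zero_eq_constantCoeff]

/-- `hh t` of the list of all `t`-th roots of unity is nonzero. -/
lemma hh_t_roots {t : ℕ} (ht : 2 ≤ t) {ω : ℂ} (hω : IsPrimitiveRoot ω t) :
    hh t ((List.range t).map (ω ^ ·)) = (-1) ^ (t+1) * ((List.range t).map (ω ^ ·)).prod := by
  set R : List ℂ := (List.range t).map (ω ^ ·) with hR
  have hlen : R.length = t := by simp [hR]
  have hRtwist : R = twistList t ω [1] := by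
    simp only [hR, twistList, List.map_cons, List.map_nil, mul_one]
    exact List.map_eq_flatMap
  have key := congrArg (PowerSeries.coeff t) (QS_mul_hhS R)
  rw [PowerSeries.coeff_mul, Finset.Nat.sum_antidiagonal_eq_sum_range_succ_mk] at key
  have hco : (PowerSeries.coeff t) (1 : PowerSeries ℂ) = 0 := by
    rw [PowerSeries.coeff_one]; simp; omega
  rw [hco] at key
  obtain ⟨s, rfl⟩ : ∃ s, t = s + 1 := ⟨t - 1, by omega⟩
  rw [Finset.sum_range_succ, Finset.sum_range_succ'] at key
  have hmid : ∀ a ∈ Finset.range s,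
      (PowerSeries.coeff (a+1)) (QS R) * (PowerSeries.coeff (s+1-(a+1))) (hhS R) = 0 := by
    intro a ha
    have : hh (s+1-(a+1)) R = 0 := by
      rw [hRtwist]
      apply hh_twist_eq_zero (by omega) hω
      simp at ha
      intro hdvd
      rcases hdvd with ⟨c, hc⟩
      rcases c with _ | c
      · omega
      · have : s + 1 - (a+1) ≤ s := by omega
        have h2 : (s+1) * (c+1) ≥ s+1 := by nlinarith
        omega
    simp [hhS, PowerSeries.coeff_mk] at this ⊢
    right; exact this
  rw [Finset.sum_eq_zero hmid] at key
  have h0 : (PowerSeries.coeff (s+1)) (hhS R) = hh (s+1) R := by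
    simp [hhS, PowerSeries.coeff_mk]
  have htop : (PowerSeries.coeff (s+1)) (QS R) = (-1)^(s+1) * R.prod := by
    rw [← hlen, coeff_QS_top]
  have h00 : (PowerSeries.coeff 0) (QS R) = 1 := constCoeff_QS R
  simp only [Nat.sub_zero, Nat.sub_self] at key
  rw [h00, htop] at key
  have hhh0 : (PowerSeries.coeff 0) (hhS R) = 1 := by simp [hhS, PowerSeries.coeff_mk, hh_zero]
  rw [hhh0, h0] at key
  have : hh (s+1) R = -((-1)^(s+1) * R.prod) := by linear_combination key
  rw [this]
  ring

end PartC
noncomputable section PartD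

lemma flatMap_cons_zero_perm (g : ℕ → ℂ) (r : ℕ) (l : List ℕ) :
    (l.flatMap fun k => g k :: List.replicate r (0:ℂ)).Perm
      (l.map g ++ List.replicate (l.length * r) (0:ℂ)) := by
  induction l with
  | nil => simp
  | cons k l ih =>
    rw [List.flatMap_cons, List.map_cons, List.length_cons]
    have s1 : ((g k :: List.replicate r 0) ++ (l.flatMap fun k => g k :: List.replicate r (0:ℂ))).Perm
        ((g k :: List.replicate r 0) ++ (l.map g ++ List.replicate (l.length * r) (0:ℂ))) :=
      ih.append_left _
    refine s1.trans ?_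
    have s2 : ((g k :: List.replicate r 0) ++ (l.map g ++ List.replicate (l.length * r) (0:ℂ)))
        = g k :: (List.replicate r 0 ++ (l.map g ++ List.replicate (l.length * r) (0:ℂ))) := by
      simp
    rw [s2]
    have s3 : (List.replicate r (0:ℂ) ++ (l.map g ++ List.replicate (l.length * r) (0:ℂ))).Perm
        ((l.map g ++ List.replicate (l.length * r) (0:ℂ)) ++ List.replicate r 0) :=
      List.perm_append_comm
    refine (s3.cons _).trans ?_
    have s4 : g k :: ((l.map g ++ List.replicate (l.length * r) (0:ℂ)) ++ List.replicate r 0)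
        = g k :: l.map g ++ List.replicate ((l.length + 1) * r) (0:ℂ) := by
      simp [List.append_assoc, ← List.replicate_add]
      congr 2
      ring
    rw [s4]

/-- `hz t` at the twist of `Y₀ = (1,0,…,0)` is nonzero. -/
lemma hz_t_twist_ne_zero {t m : ℕ} (ht : 2 ≤ t) (hm : 1 ≤ m) {ω : ℂ} (hω : IsPrimitiveRoot ω t) :
    hz (t : ℤ) (twistList t ω ((1:ℂ) :: List.replicate (m-1) 0)) ≠ 0 := by
  have hperm : (twistList t ω ((1:ℂ) :: List.replicate (m-1) 0)).Perm
      (((List.range t).map (ω ^ ·)) ++ List.replicate (t * (m-1)) (0:ℂ)) := by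
    have h1 : twistList t ω ((1:ℂ) :: List.replicate (m-1) 0)
        = (List.range t).flatMap fun k => (ω ^ k) :: List.replicate (m-1) (0:ℂ) := by
      unfold twistList
      apply List.flatMap_congr
      intro k _
      simp [List.map_replicate]
    rw [h1]
    have := flatMap_cons_zero_perm (fun k => ω ^ k) (m-1) (List.range t)
    simpa using this
  have hval : hz (t : ℤ) (twistList t ω ((1:ℂ) :: List.replicate (m-1) 0))
      = hh t ((List.range t).map (ω ^ ·)) := by
    unfold hz
    rw [if_pos (by positivity)]
    rw [Int.toNat_natCast]
    rw [hh_perm hperm, hh_append_replicate_zero]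
  rw [hval, hh_t_roots ht hω]
  apply mul_ne_zero
  · apply pow_ne_zero; norm_num
  · apply List.prod_ne_zero
    intro h0
    simp only [List.mem_map] at h0
    rcases h0 with ⟨k, _, hk⟩
    exact (pow_ne_zero k (hω.ne_zero (by omega))) hk

end PartD
noncomputable section PartE
open Finset

/-- A downward-closed finite set of naturals is an initial segment. -/
lemma dc_finset (T : Finset ℕ) (h : ∀ j, j + 1 ∈ T → j ∈ T) : T = Finset.range T.card := by
  have hdesc : ∀ k l : ℕ, k ∈ T → l ≤ k → l ∈ T := by
    intro k
    induction k with
    | zero => intro l hk hl; rwa [Nat.le_zero.mp hl]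
    | succ k ih =>
      intro l hk hl
      rcases Nat.eq_or_lt_of_le hl with rfl | hlt
      · exact hk
      · exact ih l (h k hk) (by omega)
  ext k
  simp only [Finset.mem_range]
  constructor
  · intro hk
    have hsub : Finset.range (k+1) ⊆ T := by
      intro l hl
      simp only [Finset.mem_range] at hl
      exact hdesc k l hk (by omega)
    have := Finset.card_le_card hsub
    simp at this; omega
  · intro hk
    by_contra hkT
    have hsub : T ⊆ Finset.range k := by
      intro l hl
      simp only [Finset.mem_range]
      by_contra hlk
      exact hkT (hdesc l k hl (by omega))
    have := Finset.card_le_card hsub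
    simp at this; omega

/-- Sum of distinct naturals is at least `0 + 1 + ⋯ + (card - 1)`. -/
lemma sum_distinct_lower (s : Finset ℕ) : ∑ j ∈ Finset.range s.card, j ≤ ∑ x ∈ s, x := by
  classical
  induction s using Finset.strongInduction with
  | _ s ih =>
    rcases s.eq_empty_or_nonempty with rfl | hne
    · simp
    · have hMmem := s.max'_mem hne
      set M := s.max' hne with hM
      have hcard : s.card ≤ M + 1 := by
        have : s ⊆ Finset.range (M+1) := by
          intro x hx
          simp only [Finset.mem_range]
          have := s.le_max' x hx
          omega
        simpa using Finset.card_le_card this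
      have herase := ih (s.erase M) (Finset.erase_ssubset hMmem)
      have hcards : (s.erase M).card = s.card - 1 := by
        rw [Finset.card_erase_of_mem hMmem]
      have hsum : ∑ x ∈ s, x = M + ∑ x ∈ s.erase M, x := (Finset.add_sum_erase s id hMmem).symm
      obtain ⟨c, hc⟩ : ∃ c, s.card = c + 1 := ⟨s.card - 1, by
        have := Finset.card_pos.mpr hne; omega⟩
      rw [hc, Finset.sum_range_succ, hsum]
      rw [hcards, hc] at herase
      simp only [Nat.add_sub_cancel] at herase
      omega

/-- Sum of distinct naturals all congruent to `r` mod `t` is at least `∑_{j<n} (t j + r)`. -/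
lemma sum_class_lower (t r : ℕ) (ht : 1 ≤ t) (s : Finset ℕ) (hs : ∀ x ∈ s, x % t = r) :
    ∑ j ∈ Finset.range s.card, (t * j + r) ≤ ∑ x ∈ s, x := by
  classical
  have himg : ∀ x ∈ s, x = t * (x / t) + r := by
    intro x hx
    rw [← hs x hx]
    exact (Nat.div_add_mod x t).symm
  set s' := s.image (· / t) with hs'
  have hinj : Set.InjOn (· / t) s := by
    intro x hx y hy hxy
    simp only at hxy
    rw [himg x hx, himg y hy, hxy]
  have hcard : s'.card = s.card := Finset.card_image_of_injOn hinj
  have hsum' : ∑ x ∈ s, x = t * (∑ q ∈ s', q) + s.card * r := by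
    rw [hs', Finset.sum_image (fun x hx y hy h => hinj hx hy h)]
    calc ∑ x ∈ s, x = ∑ x ∈ s, (t * (x / t) + r) := Finset.sum_congr rfl himg
      _ = (∑ x ∈ s, t * (x / t)) + s.card * r := by
          rw [Finset.sum_add_distrib, Finset.sum_const, smul_eq_mul]
      _ = t * (∑ x ∈ s, x / t) + s.card * r := by rw [Finset.mul_sum]
  have hlow := sum_distinct_lower s'
  rw [hcard] at hlow
  calc ∑ j ∈ Finset.range s.card, (t * j + r)
      = t * (∑ j ∈ Finset.range s.card, j) + s.card * r := by
        rw [Finset.sum_add_distrib, Finset.mul_sum]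
        simp [Finset.sum_const, mul_comm]
    _ ≤ t * (∑ q ∈ s', q) + s.card * r := by
        have := Nat.mul_le_mul_left t hlow
        omega
    _ = ∑ x ∈ s, x := hsum'.symm

lemma list_sum_range (f : ℕ → ℕ) (n : ℕ) :
    ((List.range n).map f).sum = ∑ i ∈ Finset.range n, f i := by
  induction n with
  | zero => simp
  | succ n ih => rw [List.range_succ, Finset.sum_range_succ, List.map_append]; simp [ih]

lemma list_getD_sum (L : List ℕ) :
    ∑ k ∈ Finset.range L.length, L.getD k 0 = L.sum := by
  induction L with
  | nil => simp
  | cons x L ih =>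
    rw [List.length_cons, Finset.sum_range_succ']
    simp only [List.getD_cons_succ, List.getD_cons_zero]
    rw [ih, List.sum_cons, Nat.add_comm]

/-- glue: length of `List.filter` over `List.range` vs `Finset.filter` card. -/
lemma length_filter_range (N : ℕ) (p : ℕ → Prop) [DecidablePred p] :
    ((List.range N).filter (fun n => decide (p n))).length
      = ((Finset.range N).filter p).card := by
  induction N with
  | zero => simp
  | succ N ih =>
    rw [List.range_succ, List.filter_append, Finset.range_add_one]
    by_cases hN : p N
    · rw [Finset.filter_insert, if_pos hN, Finset.card_insert_of_notMem (by simp)]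
      simp [hN, ih]
    · rw [Finset.filter_insert, if_neg hN]
      simp [hN, ih]

/-- In a strictly decreasing list of naturals, the `k`-th entry is at least `len - 1 - k`. -/
lemma strict_desc_getD (L : List ℕ) (hL : L.Pairwise (· > ·)) :
    ∀ d k, k + d + 1 = L.length → d ≤ L.getD k 0 := by
  intro d
  induction d with
  | zero => exact fun k hk => Nat.zero_le _
  | succ d ih =>
    intro k hk
    have h1 : d ≤ L.getD (k+1) 0 := ih (k+1) (by omega)
    have h2 : L.getD (k+1) 0 < L.getD k 0 := by
      have hk1 : k < L.length := by omega
      have hk2 : k + 1 < L.length := by omega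
      rw [List.getD_eq_getElem L 0 hk1, List.getD_eq_getElem L 0 hk2]
      exact List.pairwise_iff_getElem.mp hL k (k+1) hk1 hk2 (by omega)
    omega

end PartE
noncomputable section PartF
open Finset

lemma sortDesc_perm (L : List ℕ) : (sortDesc L).Perm L := List.perm_insertionSort _ L

lemma sortDesc_sorted (L : List ℕ) : (sortDesc L).Pairwise (· ≥ ·) :=
  List.pairwise_insertionSort _ L

lemma sortDesc_strict (L : List ℕ) (h : L.Nodup) : (sortDesc L).Pairwise (· > ·) := by
  have h1 : (sortDesc L).Nodup := (sortDesc_perm L).nodup_iff.mpr h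
  have h2 := (sortDesc_sorted L).and h1
  exact h2.imp fun {a b} hab => by
    rcases hab with ⟨hge, hne⟩
    omega

lemma list_length_flatMap_range {α : Type*} (s : ℕ) (f : ℕ → List α) :
    ((List.range s).flatMap f).length = ∑ i ∈ Finset.range s, (f i).length := by
  induction s with
  | zero => simp
  | succ s ih =>
    rw [List.range_succ, List.flatMap_append, List.length_append, ih, Finset.sum_range_succ]
    simp

lemma list_sum_flatMap_range (s : ℕ) (f : ℕ → List ℕ) :
    ((List.range s).flatMap f).sum = ∑ i ∈ Finset.range s, (f i).sum := by
  induction s with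
  | zero => simp
  | succ s ih =>
    rw [List.range_succ, List.flatMap_append, List.sum_append, ih, Finset.sum_range_succ]
    simp

/-- the list `⋃_i [t j + i : j < n i]` (increasing blocks), as used in `coreP`. -/
def flList (t : ℕ) (n : ℕ → ℕ) : List ℕ :=
  (List.range t).flatMap fun i => (List.range (n i)).map fun j => t * j + i

lemma flList_length (t : ℕ) (n : ℕ → ℕ) :
    (flList t n).length = ∑ i ∈ Finset.range t, n i := by
  unfold flList
  rw [list_length_flatMap_range]
  simp

lemma flList_sum (t : ℕ) (n : ℕ → ℕ) :
    (flList t n).sum = ∑ i ∈ Finset.range t, ∑ j ∈ Finset.range (n i), (t * j + i) := by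
  unfold flList
  rw [list_sum_flatMap_range]
  exact Finset.sum_congr rfl fun i _ => list_sum_range _ _

lemma flList_nodup (t : ℕ) (n : ℕ → ℕ) : (flList t n).Nodup := by
  unfold flList
  rw [List.nodup_flatMap]
  constructor
  · intro i hi
    apply List.Nodup.map
    · simp only [List.mem_range] at hi
      intro a b hab
      simp only at hab
      have : t * a = t * b := by omega
      exact Nat.eq_of_mul_eq_mul_left (by omega) this
    · exact List.nodup_range
  · rw [List.pairwise_iff_get]
    intro a b hab
    simp only [Function.onFun, List.get_eq_getElem, List.getElem_range]
    intro x hx hy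
    simp only [List.mem_map, List.mem_range] at hx hy
    obtain ⟨j1, hj1, rfl⟩ := hx
    obtain ⟨j2, hj2, he⟩ := hy
    have h1 : (a : ℕ) < t := by have := a.isLt; simpa using this
    have h2 : (b : ℕ) < t := by have := b.isLt; simpa using this
    have h3 : (t * j1 + (a:ℕ)) % t = (a:ℕ) := by
      rw [Nat.mul_add_mod]; exact Nat.mod_eq_of_lt h1
    have h4 : (t * j2 + (b:ℕ)) % t = (b:ℕ)  := by
      rw [Nat.mul_add_mod]; exact Nat.mod_eq_of_lt h2
    rw [he] at h4
    have h5 : (a:ℕ) = (b:ℕ) := by omega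
    exact absurd (Fin.ext h5) (ne_of_lt hab)

lemma flList_mem (t : ℕ) (n : ℕ → ℕ) (x : ℕ) :
    x ∈ flList t n ↔ x % t < t ∧ x / t < n (x % t) := by
  unfold flList
  simp only [List.mem_flatMap, List.mem_map, List.mem_range]
  constructor
  · rintro ⟨i, hi, j, hj, rfl⟩
    have h1 : (t * j + i) % t = i := by
      rw [Nat.mul_add_mod]; exact Nat.mod_eq_of_lt hi
    have h2 : (t * j + i) / t = j := by
      rw [Nat.mul_add_div (by omega)]
      simp [Nat.div_eq_of_lt hi]
    rw [h1, h2]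
    exact ⟨hi, hj⟩
  · rintro ⟨h1, h2⟩
    exact ⟨x % t, h1, x / t, h2, Nat.div_add_mod x t⟩

end PartF
noncomputable section PartG
open Finset

/-- the beta-numbers of `lam` with respect to `N` parts. -/
def Bfun (lam : ℕ → ℕ) (N : ℕ) : ℕ → ℕ := fun j => lam j + (N - 1 - j)

lemma betaList_eq (lam : ℕ → ℕ) (N : ℕ) :
    betaList lam N = (List.range N).map (Bfun lam N) := rfl

lemma Bfun_strict {lam : ℕ → ℕ} (hlam : Antitone lam) {N j k : ℕ}
    (hjk : j < k) (hk : k < N) : Bfun lam N k < Bfun lam N j := by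
  have := hlam (le_of_lt hjk)
  unfold Bfun
  omega

lemma betaList_pairwise {lam : ℕ → ℕ} (hlam : Antitone lam) (N : ℕ) :
    (betaList lam N).Pairwise (· > ·) := by
  rw [betaList_eq, List.pairwise_map]
  have h0 : (List.range N).Pairwise (fun a b => a < b ∧ b < N) := by
    rw [List.pairwise_iff_get]
    intro a b hab
    simp only [List.get_eq_getElem, List.getElem_range]
    exact ⟨by simpa using hab, by simpa using b.isLt⟩
  exact h0.imp fun {a b} hab => Bfun_strict hlam hab.1 hab.2

lemma betaList_nodup {lam : ℕ → ℕ} (hlam : Antitone lam) (N : ℕ) :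
    (betaList lam N).Nodup :=
  (betaList_pairwise hlam N).imp fun {a b} h => by omega

lemma nres_eq_card (lam : ℕ → ℕ) (N t r : ℕ) :
    nres lam N t r = ((Finset.range N).filter fun j => Bfun lam N j % t = r).card := by
  unfold nres
  rw [betaList_eq, List.filter_map, List.length_map]
  rw [show ((fun b => decide (b % t = r)) ∘ Bfun lam N) = (fun n => decide (Bfun lam N n % t = r)) from rfl]
  rw [length_filter_range N (fun j => Bfun lam N j % t = r)]

lemma sum_nres (lam : ℕ → ℕ) (N t : ℕ) (ht : 1 ≤ t) :
    ∑ r ∈ Finset.range t, nres lam N t r = N := by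
  have h1 : ∀ r ∈ Finset.range t, nres lam N t r
      = ∑ j ∈ (Finset.range N).filter (fun j => Bfun lam N j % t = r), 1 := by
    intro r _
    rw [nres_eq_card, Finset.card_eq_sum_ones]
  rw [Finset.sum_congr rfl h1]
  rw [Finset.sum_fiberwise_of_maps_to (fun j _ => Finset.mem_range.mpr (Nat.mod_lt _ (by omega)))]
  simp

lemma coreP_eq (lam : ℕ → ℕ) (N t k : ℕ) :
    coreP lam N t k = if k < N then (sortDesc (flList t (nres lam N t))).getD k 0 + k + 1 - N
      else 0 := rfl

/-- If `lam` agrees with its core, then the sum of its beta-numbers is that of the staircase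
multiset. -/
lemma core_beta_sum {lam : ℕ → ℕ} {N t : ℕ} (ht : 1 ≤ t)
    (hcore : ∀ k, lam k = coreP lam N t k) :
    ∑ k ∈ Finset.range N, (lam k + (N - 1 - k))
      = ∑ i ∈ Finset.range t, ∑ j ∈ Finset.range (nres lam N t i), (t * j + i) := by
  set L := sortDesc (flList t (nres lam N t)) with hL
  have hlen : L.length = N := by
    rw [hL, (sortDesc_perm _).length_eq, flList_length, sum_nres lam N t ht]
  have hstrict : L.Pairwise (· > ·) := sortDesc_strict _ (flList_nodup _ _)
  have hgetD : ∀ k < N, N - 1 - k ≤ L.getD k 0 := by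
    intro k hk
    exact strict_desc_getD L hstrict (N - 1 - k) k (by omega)
  have hpt : ∀ k ∈ Finset.range N, lam k + (N - 1 - k) = L.getD k 0 := by
    intro k hk
    simp only [Finset.mem_range] at hk
    have h1 := hcore k
    rw [coreP_eq, if_pos hk, ← hL] at h1
    have := hgetD k hk
    omega
  have h2 : ∑ k ∈ Finset.range N, L.getD k 0 = L.sum := by
    rw [← hlen]; exact list_getD_sum L
  have h3 : L.sum = (flList t (nres lam N t)).sum := (sortDesc_perm _).sum_eq
  rw [Finset.sum_congr rfl hpt, h2, h3, flList_sum]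

/-- If the beta-set is closed under subtracting `t`, then `lam` is a `t`-core. -/
lemma core_of_closed {lam : ℕ → ℕ} {N t : ℕ} (ht : 1 ≤ t) (hlam : Antitone lam)
    (hlen : ∀ i, N ≤ i → lam i = 0)
    (hcl : ∀ j < N, t ≤ Bfun lam N j → ∃ j' < N, Bfun lam N j' = Bfun lam N j - t) :
    ∀ k, lam k = coreP lam N t k := by
  classical
  set Bset : Finset ℕ := (Finset.range N).image (Bfun lam N) with hBset
  have hBinj : Set.InjOn (Bfun lam N) (Finset.range N) := by
    intro x hx y hy hxy
    simp only [Finset.coe_range, Set.mem_Iio] at hx hy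
    by_contra hne
    rcases Nat.lt_or_ge x y with h | h
    · have := Bfun_strict hlam h hy; omega
    · have hyx : y < x := by omega
      have := Bfun_strict hlam hyx hx; omega
  have hmemB : ∀ x, x ∈ Bset ↔ ∃ j < N, Bfun lam N j = x := by
    intro x
    simp [hBset, Finset.mem_image]
  -- the residue classes
  have hT : ∀ r < t, (((Bset.filter (· % t = r)).image (· / t)) : Finset ℕ)
      = Finset.range (nres lam N t r) := by
    intro r hr
    set S := Bset.filter (· % t = r) with hS
    have hSmem : ∀ x ∈ S, x = t * (x / t) + r := by
      intro x hx
      rw [hS, Finset.mem_filter] at hx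
      rw [← hx.2]
      exact (Nat.div_add_mod x t).symm
    have hSinj : Set.InjOn (· / t) S := by
      intro x hx y hy hxy
      simp only [Finset.mem_coe] at hx hy
      simp only at hxy
      rw [hSmem x hx, hSmem y hy, hxy]
    have hcardT : (S.image (· / t)).card = S.card := Finset.card_image_of_injOn hSinj
    have hScard : S.card = nres lam N t r := by
      rw [nres_eq_card, hS, hBset, Finset.filter_image]
      exact Finset.card_image_of_injOn (hBinj.mono (Finset.filter_subset _ _))
    have hdc : ∀ j, j + 1 ∈ S.image (· / t) → j ∈ S.image (· / t) := by
      intro j hj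
      simp only [Finset.mem_image] at hj
      obtain ⟨x, hx, hxj⟩ := hj
      have hxval : x = t * (j + 1) + r := by
        have := hSmem x hx
        rwa [hxj] at this
      have hmul : t * (j + 1) = t * j + t := by ring
      rw [hS, Finset.mem_filter] at hx
      obtain ⟨jx, hjx, hBjx⟩ := (hmemB x).mp hx.1
      have hxt : t ≤ Bfun lam N jx := by omega
      obtain ⟨j', hj', hBj'⟩ := hcl jx hjx hxt
      rw [hBjx] at hBj'
      have hval' : Bfun lam N j' = t * j + r := by omega
      have hmem' : Bfun lam N j' ∈ S := by
        rw [hS, Finset.mem_filter]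
        refine ⟨(hmemB _).mpr ⟨j', hj', rfl⟩, ?_⟩
        rw [hval', Nat.mul_add_mod]
        exact Nat.mod_eq_of_lt hr
      refine Finset.mem_image.mpr ⟨Bfun lam N j', hmem', ?_⟩
      show Bfun lam N j' / t = j
      rw [hval', Nat.mul_add_div (by omega), Nat.div_eq_of_lt hr]
      omega
    have := dc_finset _ hdc
    rw [this, hcardT, hScard]
  -- membership equivalence with flList
  have hmemiff : ∀ x, x ∈ betaList lam N ↔ x ∈ flList t (nres lam N t) := by
    intro x
    rw [flList_mem]
    have hxB : x ∈ betaList lam N ↔ x ∈ Bset := by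
      rw [betaList_eq, hBset]
      constructor
      · intro hx
        simp only [List.mem_map, List.mem_range] at hx
        obtain ⟨j, hj, rfl⟩ := hx
        exact Finset.mem_image.mpr ⟨j, Finset.mem_range.mpr hj, rfl⟩
      · intro hx
        obtain ⟨j, hj, rfl⟩ := Finset.mem_image.mp hx
        simp only [List.mem_map, List.mem_range]
        exact ⟨j, Finset.mem_range.mp hj, rfl⟩
    rw [hxB]
    constructor
    · intro hx
      have hr : x % t < t := Nat.mod_lt _ (by omega)
      refine ⟨hr, ?_⟩
      have hxS : x ∈ Bset.filter (· % t = x % t) := by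
        rw [Finset.mem_filter]; exact ⟨hx, rfl⟩
      have hxT : x / t ∈ (Bset.filter (· % t = x % t)).image (· / t) :=
        Finset.mem_image.mpr ⟨x, hxS, rfl⟩
      rw [hT (x % t) hr] at hxT
      simpa using hxT
    · rintro ⟨hr, hq⟩
      have hxT : x / t ∈ Finset.range (nres lam N t (x % t)) := Finset.mem_range.mpr hq
      rw [← hT (x % t) hr] at hxT
      obtain ⟨y, hy, hyx⟩ := Finset.mem_image.mp hxT
      rw [Finset.mem_filter] at hy
      have h1 : y = t * (y / t) + y % t := (Nat.div_add_mod y t).symm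
      have h2 : x = t * (x / t) + x % t := (Nat.div_add_mod x t).symm
      have hxy : y = x := by rw [h1, h2, hyx, hy.2]
      rw [← hxy]
      exact hy.1
  -- conclude the sorted lists agree
  haveI : IsAntisymm ℕ (· ≥ ·) := ⟨fun a b h1 h2 => le_antisymm h2 h1⟩
  have hperm : (sortDesc (flList t (nres lam N t))).Perm (betaList lam N) := by
    apply (List.perm_ext_iff_of_nodup ((sortDesc_perm _).nodup_iff.mpr (flList_nodup _ _))
      (betaList_nodup hlam N)).mpr
    intro a
    rw [(sortDesc_perm _).mem_iff, ← hmemiff a]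
  have heq : sortDesc (flList t (nres lam N t)) = betaList lam N :=
    List.Perm.eq_of_pairwise (fun a b _ _ h1 h2 => le_antisymm h2 h1) (sortDesc_sorted _)
      ((betaList_pairwise hlam N).imp fun {a b} h => le_of_lt h) hperm
  intro k
  rw [coreP_eq, heq]
  by_cases hk : k < N
  · rw [if_pos hk]
    have : (betaList lam N).getD k 0 = lam k + (N - 1 - k) := by
      rw [betaList_eq, List.getD_eq_getElem _ _ (by simpa using hk)]
      simp [Bfun]
    rw [this]
    omega
  · rw [if_neg hk]
    exact hlen k (by omega)

end PartG
noncomputable section PartH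
open Finset

lemma det_zero_of_counts_ne {N : ℕ} (f g : Fin N → ℕ) (M : Matrix (Fin N) (Fin N) ℂ)
    (hM : ∀ i j, f i ≠ g j → M i j = 0)
    (r : ℕ) (hr : (Finset.univ.filter fun i => f i = r).card
      ≠ (Finset.univ.filter fun j => g j = r).card) :
    M.det = 0 := by
  classical
  rw [Matrix.det_apply]
  apply Finset.sum_eq_zero
  intro σ _
  have hzero : ∃ i, M (σ i) i = 0 := by
    by_contra hno
    push_neg at hno
    have hfg : ∀ i, f (σ i) = g i := fun i => by
      by_contra hne
      exact hno i (hM _ _ hne)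
    apply hr
    have h1 : (Finset.univ.filter fun i : Fin N => g i = r)
        = Finset.univ.filter fun i => f (σ i) = r := by
      apply Finset.filter_congr
      intro i _
      rw [hfg i]
    rw [h1]
    symm
    apply Finset.card_bij (fun i _ => σ i)
    · intro i hi
      simp only [Finset.mem_filter, Finset.mem_univ, true_and] at hi ⊢
      exact hi
    · intro i _ j _ hij
      exact σ.injective hij
    · intro j hj
      simp only [Finset.mem_filter, Finset.mem_univ, true_and] at hj ⊢
      exact ⟨σ.symm j, by simp [hj], by simp⟩
  obtain ⟨i, hi⟩ := hzero
  have hprod : (∏ j, M (σ j) j) = 0 := Finset.prod_eq_zero (Finset.mem_univ i) hi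
  rw [hprod, smul_zero]

end PartH
noncomputable section PartI
open Finset

lemma card_fin_filter (N : ℕ) (p : ℕ → Prop) [DecidablePred p] :
    (Finset.univ.filter fun i : Fin N => p i).card = ((Finset.range N).filter p).card := by
  refine Finset.card_bij (fun i _ => (i : ℕ)) ?_ ?_ ?_
  · intro i hi
    simp only [Finset.mem_filter, Finset.mem_univ, true_and] at hi
    simp only [Finset.mem_filter, Finset.mem_range]
    exact ⟨i.isLt, hi⟩
  · intro i _ j _ h
    exact Fin.ext h
  · intro j hj
    simp only [Finset.mem_filter, Finset.mem_range] at hj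
    exact ⟨⟨j, hj.1⟩, by simp [hj.2], rfl⟩

lemma entry_eq {lam mu : ℕ → ℕ} {N : ℕ} (hmuB : ∀ j < N, N - 1 - j ≤ Bfun mu N j)
    (i j : Fin N) (X : List ℂ) :
    hz ((lam i : ℤ) - (mu j : ℤ) - i + j) X
      = hz ((Bfun lam N i : ℤ) - (Bfun mu N j : ℤ)) X := by
  congr 1
  have hi : (i:ℕ) < N := i.isLt
  have hj : (j:ℕ) < N := j.isLt
  have h1 : (Bfun lam N i : ℤ) = (lam i : ℤ) + (N : ℤ) - 1 - (i : ℕ) := by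
    unfold Bfun; push_cast; omega
  have h2 : (Bfun mu N j : ℤ) = (mu j : ℤ) + (N : ℤ) - 1 - (j : ℕ) := by
    unfold Bfun; push_cast; omega
  rw [h1, h2]
  ring

lemma mod_ne_not_dvd {a b t : ℕ} (ht : 1 ≤ t) (h : a % t ≠ b % t) :
    ¬ (t : ℤ) ∣ ((a : ℤ) - (b : ℤ)) := by
  intro hdvd
  have : b ≡ a [MOD t] := (Nat.modEq_iff_dvd).mpr hdvd
  exact h this.symm

/-- Direction ⇐ : if `lam` is a `t`-core, the skew Schur polynomials vanish. -/
lemma vanish_of_core {t m : ℕ} (ht : 2 ≤ t) {ω : ℂ} (hω : IsPrimitiveRoot ω t)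
    (lam : ℕ → ℕ) (hlam : Antitone lam) (hlen : ∀ i, t * m ≤ i → lam i = 0)
    (hcore : ∀ k, lam k = coreP lam (t * m) t k)
    (mu : ℕ → ℕ) (hmu : Antitone mu) (hle : ∀ i, mu i ≤ lam i) (hne : mu ≠ lam)
    (Y : List ℂ) : skewSchur lam mu (t * m) (twistList t ω Y) = 0 := by
  classical
  set N := t * m with hN
  have hmulen : ∀ i, N ≤ i → mu i = 0 := fun i hi => by
    have := hle i; have := hlen i hi; omega
  obtain ⟨k0, hk0⟩ : ∃ k, mu k < lam k := by
    by_contra hno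
    push_neg at hno
    exact hne (funext fun k => le_antisymm (hle k) (hno k))
  have hk0N : k0 < N := by
    by_contra h
    have := hlen k0 (by omega)
    omega
  have hmuB : ∀ j < N, N - 1 - j ≤ Bfun mu N j := fun j _ => by unfold Bfun; omega
  by_cases hcnt : ∀ r < t, nres lam N t r = nres mu N t r
  · -- impossible: the core is strictly contained in `mu`
    exfalso
    have hS := core_beta_sum (t := t) (N := N) (by omega) hcore
    -- lower bound for the `mu` side
    have hlow : ∑ i ∈ Finset.range t, ∑ j ∈ Finset.range (nres mu N t i), (t * j + i)
        ≤ ∑ k ∈ Finset.range N, (mu k + (N - 1 - k)) := by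
      have hpart : ∑ k ∈ Finset.range N, Bfun mu N k
          = ∑ r ∈ Finset.range t, ∑ k ∈ (Finset.range N).filter
              (fun k => Bfun mu N k % t = r), Bfun mu N k := by
        rw [Finset.sum_fiberwise_of_maps_to
          (fun j _ => Finset.mem_range.mpr (Nat.mod_lt _ (by omega)))]
      have hclass : ∀ r ∈ Finset.range t,
          ∑ j ∈ Finset.range (nres mu N t r), (t * j + r)
            ≤ ∑ k ∈ (Finset.range N).filter (fun k => Bfun mu N k % t = r), Bfun mu N k := by
        intro r _
        have hinj : Set.InjOn (Bfun mu N)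
            ((Finset.range N).filter (fun k => Bfun mu N k % t = r)) := by
          intro x hx y hy hxy
          simp only [Finset.coe_filter, Set.mem_setOf_eq, Finset.mem_range] at hx hy
          by_contra hne'
          rcases Nat.lt_or_ge x y with h | h
          · have := Bfun_strict hmu h hy.1; omega
          · have : y < x := by omega
            have := Bfun_strict hmu this hx.1; omega
        have himg := sum_class_lower t r (by omega)
          (((Finset.range N).filter (fun k => Bfun mu N k % t = r)).image (Bfun mu N))
          (by
            intro x hx
            obtain ⟨k, hk, rfl⟩ := Finset.mem_image.mp hx
            exact (Finset.mem_filter.mp hk).2)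
        rw [Finset.sum_image (fun x hx y hy h => hinj hx hy h),
          Finset.card_image_of_injOn hinj] at himg
        rw [← nres_eq_card] at himg
        exact himg
      calc ∑ i ∈ Finset.range t, ∑ j ∈ Finset.range (nres mu N t i), (t * j + i)
          ≤ ∑ r ∈ Finset.range t, ∑ k ∈ (Finset.range N).filter
              (fun k => Bfun mu N k % t = r), Bfun mu N k := Finset.sum_le_sum hclass
        _ = ∑ k ∈ Finset.range N, Bfun mu N k := hpart.symm
        _ = ∑ k ∈ Finset.range N, (mu k + (N - 1 - k)) := rfl
    have hsame : ∑ i ∈ Finset.range t, ∑ j ∈ Finset.range (nres mu N t i), (t * j + i)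
        = ∑ i ∈ Finset.range t, ∑ j ∈ Finset.range (nres lam N t i), (t * j + i) := by
      apply Finset.sum_congr rfl
      intro r hr
      rw [hcnt r (Finset.mem_range.mp hr)]
    rw [hsame, ← hS] at hlow
    rw [Finset.sum_add_distrib, Finset.sum_add_distrib] at hlow
    have hstrict : ∑ k ∈ Finset.range N, mu k < ∑ k ∈ Finset.range N, lam k :=
      Finset.sum_lt_sum (fun k _ => hle k) ⟨k0, Finset.mem_range.mpr hk0N, hk0⟩
    omega
  · push_neg at hcnt
    obtain ⟨r, hrt, hrne⟩ := hcnt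
    unfold skewSchur
    refine det_zero_of_counts_ne (fun i : Fin N => Bfun lam N i % t)
      (fun j : Fin N => Bfun mu N j % t) _ ?_ r ?_
    · intro i j hfg
      show hz ((lam i : ℤ) - (mu j : ℤ) - i + j) (twistList t ω Y) = 0
      rw [entry_eq hmuB]
      exact hz_twist_eq_zero (by omega) hω (mod_ne_not_dvd (by omega) hfg) Y
    · rw [card_fin_filter N (fun i => Bfun lam N i % t = r),
        card_fin_filter N (fun i => Bfun mu N i % t = r), ← nres_eq_card, ← nres_eq_card]
      exact hrne

end PartI
noncomputable section PartJ
open Finset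

lemma fun_desc_bound (g : ℕ → ℕ) (N : ℕ) (hg : ∀ k, k + 1 < N → g (k+1) < g k) :
    ∀ d k, k + d + 1 = N → d ≤ g k := by
  intro d
  induction d with
  | zero => exact fun k _ => Nat.zero_le _
  | succ d ih =>
    intro k hk
    have h1 := ih (k+1) (by omega)
    have h2 := hg k (by omega)
    omega

/-- Direction ⇒ (contrapositive): if `lam` is not a `t`-core, some skew Schur value is nonzero. -/
lemma exists_nonvanish {t m : ℕ} (ht : 2 ≤ t) (hm : 1 ≤ m) {ω : ℂ} (hω : IsPrimitiveRoot ω t)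
    (lam : ℕ → ℕ) (hlam : Antitone lam) (hlen : ∀ i, t * m ≤ i → lam i = 0)
    (hnc : ¬ ∀ k, lam k = coreP lam (t * m) t k) :
    ∃ mu : ℕ → ℕ, Antitone mu ∧ (∀ i, mu i ≤ lam i) ∧ mu ≠ lam ∧
      ∃ Y : List ℂ, Y.length = m ∧ skewSchur lam mu (t * m) (twistList t ω Y) ≠ 0 := by
  classical
  set N := t * m with hN
  have hN2 : 2 ≤ N := by
    have : t * 1 ≤ t * m := Nat.mul_le_mul_left t hm
    omega
  set B : ℕ → ℕ := Bfun lam N with hB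
  -- obtain a removable beta-number
  have hrem : ∃ a < N, t ≤ B a ∧ ∀ j < N, B j ≠ B a - t := by
    by_contra hno
    push_neg at hno
    apply hnc
    apply core_of_closed (by omega) hlam hlen
    intro j hj htj
    exact hno j hj htj
  obtain ⟨a, haN, hat, hnot⟩ := hrem
  set x0 := B a with hx0
  -- the insertion position q
  set T : Finset ℕ := (Finset.range N).filter (fun j => x0 - t < B j) with hT
  set q : ℕ := T.card with hq
  have hBs : ∀ u v, u < v → v < N → B v < B u := by
    intro u v huv hv
    rw [hB]
    exact Bfun_strict hlam huv hv
  have hdcT : ∀ j, j + 1 ∈ T → j ∈ T := by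
    intro j hj
    rw [hT, Finset.mem_filter, Finset.mem_range] at hj ⊢
    have hst : B (j+1) < B j := hBs j (j+1) (by omega) hj.1
    exact ⟨by omega, by omega⟩
  have hTr : T = Finset.range q := dc_finset T hdcT
  have hqchar : ∀ j < N, (j < q ↔ x0 - t < B j) := by
    intro j hj
    constructor
    · intro hjq
      have : j ∈ T := by rw [hTr]; exact Finset.mem_range.mpr hjq
      rw [hT, Finset.mem_filter] at this
      exact this.2
    · intro hlt
      have : j ∈ T := by rw [hT, Finset.mem_filter, Finset.mem_range]; exact ⟨hj, hlt⟩
      rw [hTr, Finset.mem_range] at this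
      exact this
  have hqN : q ≤ N := by
    rw [hq, hT]
    calc T.card ≤ (Finset.range N).card := Finset.card_filter_le _ _
      _ = N := Finset.card_range N
  have haq : a < q := (hqchar a haN).mpr (by omega)
  -- the new beta-sequence γ
  set g : ℕ → ℕ := fun k => if k < a then B k else if k + 1 < q then B (k+1)
    else if k + 1 = q then x0 - t else B k with hg
  have E1 : ∀ k, k < a → g k = B k := by
    intro k hk; rw [hg]; simp only; rw [if_pos hk]
  have E2 : ∀ k, a ≤ k → k + 1 < q → g k = B (k+1) := by
    intro k hk1 hk2; rw [hg]; simp only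
    rw [if_neg (by omega), if_pos hk2]
  have E3 : ∀ k, a ≤ k → k + 1 = q → g k = x0 - t := by
    intro k hk1 hk2; rw [hg]; simp only
    rw [if_neg (by omega), if_neg (by omega), if_pos hk2]
  have E4 : ∀ k, q ≤ k → g k = B k := by
    intro k hk; rw [hg]; simp only
    rw [if_neg (by omega), if_neg (by omega), if_neg (by omega)]
  -- γ is strictly decreasing on `range N`
  have hgstrict : ∀ k, k + 1 < N → g (k+1) < g k := by
    intro k hkN
    rcases Nat.lt_or_ge (k+1) a with h1 | h1
    · -- k+1 < a
      rw [E1 (k+1) h1, E1 k (by omega)]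
      exact hBs k (k+1) (by omega) (by omega)
    · rcases Nat.lt_or_ge k a with h2 | h2
      · -- k + 1 = a
        have hka : k + 1 = a := by omega
        rw [E1 k h2]
        rcases Nat.lt_or_ge (k+2) q with h3 | h3
        · rw [E2 (k+1) (by omega) h3]
          exact hBs k (k+2) (by omega) (by omega)
        · have h4 : k + 2 = q := by omega
          rw [E3 (k+1) (by omega) h4]
          have := hBs k a (by omega) haN
          omega
      · -- a ≤ k
        rcases Nat.lt_or_ge (k+2) q with h3 | h3
        · rw [E2 (k+1) (by omega) h3, E2 k h2 (by omega)]
          exact hBs (k+1) (k+2) (by omega) (by omega)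
        · rcases Nat.eq_or_lt_of_le h3 with h4 | h4
          · -- k + 2 = q
            rw [E3 (k+1) (by omega) h4.symm, E2 k h2 (by omega)]
            have := (hqchar (k+1) (by omega)).mp (by omega)
            omega
          · rcases Nat.lt_or_ge (k+1) q with h5 | h5
            · -- k + 1 = q - 1?  then k+2 > q and k+1 < q means k+2 = q+... contradiction
              have h6 : k + 1 + 1 = q ∨ k + 1 + 1 < q := by omega
              rcases h6 with h6 | h6
              · omega
              · omega
            · rcases Nat.eq_or_lt_of_le h5 with h7 | h7
              · -- k + 1 = q : g k = x0 - t, g (k+1) = B (k+1)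
                rw [E4 (k+1) (by omega), E3 k h2 h7.symm]
                have hle := (hqchar (k+1) (by omega))
                have : ¬ (k + 1 < q) := by omega
                have hBle : ¬ (x0 - t < B (k+1)) := fun hc => this (hle.mpr hc)
                have hne := hnot (k+1) (by omega)
                omega
              · -- q ≤ k
                rw [E4 (k+1) (by omega), E4 k (by omega)]
                exact hBs k (k+1) (by omega) (by omega)
  have hgst : ∀ k, k < N → N - 1 - k ≤ g k := by
    intro k hk
    exact fun_desc_bound g N hgstrict (N - 1 - k) k (by omega)
  have hgleB : ∀ k, k < N → g k ≤ B k := by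
    intro k hk
    rcases Nat.lt_or_ge k a with h1 | h1
    · rw [E1 k h1]
    · rcases Nat.lt_or_ge (k+1) q with h2 | h2
      · rw [E2 k h1 h2]
        exact le_of_lt (hBs k (k+1) (by omega) (by omega))
      · rcases Nat.eq_or_lt_of_le h2 with h3 | h3
        · rw [E3 k h1 h3.symm]
          have := (hqchar k hk).mp (by omega)
          omega
        · rw [E4 k (by omega)]
  -- the partition mu
  set mu : ℕ → ℕ := fun k => if k < N then g k - (N - 1 - k) else 0 with hmu
  have hmuval : ∀ k, k < N → mu k = g k - (N - 1 - k) := by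
    intro k hk; rw [hmu]; simp only; rw [if_pos hk]
  have hmuval' : ∀ k, N ≤ k → mu k = 0 := by
    intro k hk; rw [hmu]; simp only; rw [if_neg (by omega)]
  have hmu_anti : Antitone mu := by
    apply antitone_nat_of_succ_le
    intro k
    rcases Nat.lt_or_ge (k+1) N with h1 | h1
    · rw [hmuval (k+1) h1, hmuval k (by omega)]
      have := hgstrict k h1
      have := hgst (k+1) h1
      omega
    · rw [hmuval' _ h1]
      exact Nat.zero_le _
  have hmu_le : ∀ i, mu i ≤ lam i := by
    intro i
    rcases Nat.lt_or_ge i N with h1 | h1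
    · rw [hmuval _ h1]
      have h2 := hgleB i h1
      have h3 : B i = lam i + (N - 1 - i) := rfl
      omega
    · rw [hmuval' _ h1]
      exact Nat.zero_le _
  have hq1N : q - 1 < N := by omega
  have hmu_ne : mu ≠ lam := by
    intro hc
    have h1 : mu (q-1) = lam (q-1) := by rw [hc]
    rw [hmuval _ hq1N] at h1
    have h2 : g (q-1) = x0 - t := E3 (q-1) (by omega) (by omega)
    have h3 : x0 - t < B (q-1) := (hqchar (q-1) hq1N).mp (by omega)
    have h4 : B (q-1) = lam (q-1) + (N - 1 - (q-1)) := rfl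
    have h5 := hgst (q-1) hq1N
    omega
  -- Bfun of mu equals g
  have hBmu : ∀ j, j < N → Bfun mu N j = g j := by
    intro j hj
    have : Bfun mu N j = mu j + (N - 1 - j) := rfl
    rw [this, hmuval _ hj]
    have := hgst j hj
    omega
  have hmuB : ∀ j, j < N → N - 1 - j ≤ Bfun mu N j := by
    intro j hj
    rw [hBmu j hj]
    exact hgst j hj
  refine ⟨mu, hmu_anti, hmu_le, hmu_ne, (1:ℂ) :: List.replicate (m-1) 0, by simp; omega, ?_⟩
  -- the determinant is nonzero
  set Y0 : List ℂ := (1:ℂ) :: List.replicate (m-1) 0 with hY0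
  set M : Matrix (Fin N) (Fin N) ℂ :=
    Matrix.of fun i j : Fin N => hz ((lam i : ℤ) - (mu j : ℤ) - i + j) (twistList t ω Y0)
    with hM
  show M.det ≠ 0
  have hMij : ∀ i j : Fin N, M i j = hz ((B i : ℤ) - (Bfun mu N j : ℤ)) (twistList t ω Y0) := by
    intro i j
    rw [hM]
    exact entry_eq (fun j hj => hmuB j hj) i j _
  -- the column permutation
  have hq1 : 1 ≤ q := by omega
  set p : Fin N → Fin N := fun i => if (i:ℕ) < a then i else if (i:ℕ) = a then ⟨q-1, hq1N⟩
    else if (i:ℕ) < q then ⟨(i:ℕ) - 1, by omega⟩ else i with hp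
  have hpval : ∀ i : Fin N, (p i : ℕ) = if (i:ℕ) < a then (i:ℕ) else if (i:ℕ) = a then q - 1
      else if (i:ℕ) < q then (i:ℕ) - 1 else (i:ℕ) := by
    intro i
    rw [hp]
    simp only
    split_ifs <;> rfl
  have hpinj : Function.Injective p := by
    intro i j hij
    have h1 := congrArg Fin.val hij
    rw [hpval, hpval] at h1
    have hi := i.isLt
    have hj := j.isLt
    apply Fin.ext
    split_ifs at h1 <;> omega
  set e : Equiv.Perm (Fin N) := Equiv.ofBijective p (Finite.injective_iff_bijective.mp hpinj)
    with he
  have hev : ∀ i, e i = p i := fun i => rfl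
  -- the value of γ at permuted positions
  have hγp : ∀ j : Fin N, g (p j) = if (j:ℕ) = a then x0 - t else B (j:ℕ) := by
    intro j
    have hj := j.isLt
    by_cases h1 : (j:ℕ) < a
    · rw [if_neg (by omega)]
      have : (p j : ℕ) = (j:ℕ) := by rw [hpval, if_pos h1]
      rw [this]
      exact E1 _ h1
    · by_cases h2 : (j:ℕ) = a
      · rw [if_pos h2]
        have : (p j : ℕ) = q - 1 := by rw [hpval, if_neg h1, if_pos h2]
        rw [this]
        exact E3 _ (by omega) (by omega)
      · rw [if_neg h2]
        by_cases h3 : (j:ℕ) < q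
        · have : (p j : ℕ) = (j:ℕ) - 1 := by rw [hpval, if_neg h1, if_neg h2, if_pos h3]
          rw [this]
          have := E2 ((j:ℕ) - 1) (by omega) (by omega)
          rw [this]
          congr 1
          omega
        · have : (p j : ℕ) = (j:ℕ) := by rw [hpval, if_neg h1, if_neg h2, if_neg h3]
          rw [this]
          exact E4 _ (by omega)
  -- triangularity
  have htri : (M.submatrix id e).BlockTriangular id := by
    intro i j hji
    simp only [id_eq] at hji
    rw [Matrix.submatrix_apply, hev]
    simp only [id_eq]
    rw [hMij, hBmu _ (p j).isLt, hγp]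
    have hji' : (j:ℕ) < (i:ℕ) := hji
    have hiN := i.isLt
    by_cases h2 : (j:ℕ) = a
    · rw [if_pos h2]
      rcases Nat.lt_or_ge (B i) (x0 - t) with h3 | h3
      · apply hz_neg
        have : (B i : ℤ) < ((x0 - t : ℕ) : ℤ) := by exact_mod_cast h3
        omega
      · have hne : B i ≠ x0 - t := hnot i hiN
        have hlt : B i < x0 := by
          have := hBs a i (by omega) hiN
          omega
        apply hz_twist_eq_zero (by omega) hω _ Y0
        intro hdvd
        have hb1 : (0:ℤ) < (B i : ℤ) - ((x0 - t : ℕ) : ℤ) := by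
          have : ((x0-t:ℕ):ℤ) = (x0:ℤ) - t := by push_cast; omega
          rw [this]
          push_cast
          omega
        have hb2 : (B i : ℤ) - ((x0 - t : ℕ) : ℤ) < t := by
          have : ((x0-t:ℕ):ℤ) = (x0:ℤ) - t := by push_cast; omega
          rw [this]
          push_cast
          omega
        have := Int.le_of_dvd hb1 hdvd
        omega
    · rw [if_neg h2]
      apply hz_neg
      have := hBs j i hji' hiN
      have : (B i : ℤ) < (B j : ℤ) := by exact_mod_cast this
      omega
  -- determinant of the permuted matrix
  have hdet1 : (M.submatrix id e).det = ∏ i : Fin N, M i (p i) := by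
    rw [Matrix.det_of_upperTriangular htri]
    apply Finset.prod_congr rfl
    intro i _
    rw [Matrix.submatrix_apply, hev]
    rfl
  have hfa : Fin N := ⟨a, haN⟩
  have hdiag : ∀ i : Fin N, (i:ℕ) ≠ a → M i (p i) = 1 := by
    intro i hia
    rw [hMij, hBmu _ (p i).isLt, hγp, if_neg hia, sub_self, hz_zero]
  have hdiaga : M ⟨a, haN⟩ (p ⟨a, haN⟩) = hz (t : ℤ) (twistList t ω Y0) := by
    rw [hMij, hBmu _ (p ⟨a, haN⟩).isLt, hγp]
    simp only [if_pos rfl]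
    congr 1
    show (B a : ℤ) - ((x0 - t : ℕ) : ℤ) = (t:ℤ)
    rw [← hx0]
    push_cast
    omega
  have hprod : (∏ i : Fin N, M i (p i)) = hz (t : ℤ) (twistList t ω Y0) := by
    rw [Finset.prod_eq_single (⟨a, haN⟩ : Fin N)]
    · exact hdiaga
    · intro i _ hia
      exact hdiag i (fun hc => hia (Fin.ext hc))
    · intro habs
      exact absurd (Finset.mem_univ _) habs
  have hnz : (M.submatrix id e).det ≠ 0 := by
    rw [hdet1, hprod]
    have : twistList t ω Y0 = twistList t ω ((1:ℂ) :: List.replicate (m-1) 0) := rfl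
    rw [this]
    exact hz_t_twist_ne_zero ht hm hω
  intro hdet0
  apply hnz
  rw [Matrix.det_permute' e M, hdet0, mul_zero]

end PartJ
/-- `s_{λ/μ}(Y, ωY, …, ω^{t-1}Y)` vanishes for all `μ ⊊ λ` iff
`λ` is a `t`-core. -/
theorem stmt14 (t m : ℕ) (ht : 2 ≤ t) (hm : 1 ≤ m) (ω : ℂ) (hω : IsPrimitiveRoot ω t)
    (lam : ℕ → ℕ) (hlam : Antitone lam) (hlen : ∀ i, t * m ≤ i → lam i = 0) :
    (∀ mu : ℕ → ℕ, Antitone mu → (∀ i, mu i ≤ lam i) → mu ≠ lam →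
        ∀ Y : List ℂ, Y.length = m → skewSchur lam mu (t * m) (twistList t ω Y) = 0) ↔
      ∀ k, lam k = coreP lam (t * m) t k := by
  constructor
  · intro hvan
    by_contra hnc
    obtain ⟨mu, hmu, hle, hne, Y, hY, hnz⟩ := exists_nonvanish ht hm hω lam hlam hlen hnc
    exact hnz (hvan mu hmu hle hne Y hY)
  · intro hcore mu hmu hle hne Y _
    exact vanish_of_core ht hω lam hlam hlen hcore mu hmu hle hne Y
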